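/- Let f_0, f_1, …, f_n be vectors in ℂ^n such that each of the n+1 families obtained by removing one f_i is a basis of ℂ^n. For a basis B = (g_1,…,g_n) define the meromorphic function g_B(z) = det(B) / (Tr(g_1 z) ⋯ Tr(g_n z)) where Tr(g z) = ∑_i g_i z_i. Then ∑_{i=0}^{n} (−1)^i g_{(f_0,…,f̂_i,…,f_n)}(z) = 0 for every z where all the terms are defined. -/

import Mathlib

open scoped BigOperators

/-- the `n`-cocycle relation for `B ↦ g_B`. If `f_0, …, f_n ∈ ℂ^n` are such that
each family obtained by omitting one vector is a basis, and `z` is such that all the terms are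
defined (`Tr(f_i z) ≠ 0` for all `i`), then
`∑_{i=0}^{n} (-1)^i g_{(f_0,…,f̂_i,…,f_n)}(z) = 0`, where
`g_B(z) = det B / ∏_j Tr(g_j z)`. -/
theorem shintani_cocycle_relation
    (n : ℕ) (f : Fin (n + 1) → Fin n → ℂ)
    (hbasis : ∀ i : Fin (n + 1),
      LinearIndependent ℂ (fun j : Fin n => f (i.succAbove j)))
    (z : Fin n → ℂ) (hz : ∀ i : Fin (n + 1), ∑ k, f i k * z k ≠ 0) :
    ∑ i : Fin (n + 1), (-1 : ℂ) ^ (i : ℕ) *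
      ((Matrix.of fun j k : Fin n => f (i.succAbove j) k).det /
        ∏ j : Fin n, ∑ k, f (i.succAbove j) k * z k) = 0 := by
  set T : Fin (n + 1) → ℂ := fun i => ∑ k, f i k * z k with hT
  set D : Fin (n + 1) → ℂ :=
    fun i => (Matrix.of fun j k : Fin n => f (i.succAbove j) k).det with hD
  -- the (n+1)×(n+1) matrix with i-th row (f i, T i)
  set A : Matrix (Fin (n + 1)) (Fin (n + 1)) ℂ :=
    Matrix.of fun i j => (Fin.snoc (fun k => f i k) (T i) : Fin (n + 1) → ℂ) j with hA
  -- its determinant vanishes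
  have hA0 : A.det = 0 := by
    have hc := Matrix.det_updateCol_sum A (Fin.last n)
      (fun j => Fin.lastCases 0 (fun k => z k) j)
    have hcol : A.updateCol (Fin.last n)
        (fun k => ∑ i, (Fin.lastCases 0 (fun k => z k) i : ℂ) • A k i) = A := by
      ext i j
      rcases eq_or_ne j (Fin.last n) with rfl | hj
      · rw [Matrix.updateCol_self]
        rw [Fin.sum_univ_castSucc]
        simp [hA, hT, mul_comm]
      · rw [Matrix.updateCol_ne hj]
    rw [hcol] at hc
    simpa using hc
  -- Laplace expansion along the last column
  have hexp := Matrix.det_succ_column A (Fin.last n)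
  have hsub : ∀ i : Fin (n + 1),
      A.submatrix i.succAbove (Fin.last n).succAbove =
        Matrix.of fun j k : Fin n => f (i.succAbove j) k := by
    intro i
    ext j k
    simp [hA, Fin.succAbove_last]
  have key : ∑ i : Fin (n + 1), (-1 : ℂ) ^ (i : ℕ) * (T i * D i) = 0 := by
    have h1 : (0 : ℂ) = ∑ i : Fin (n + 1),
        (-1 : ℂ) ^ ((i : ℕ) + n) * T i * D i := by
      rw [← hA0, hexp]
      refine Finset.sum_congr rfl fun i _ => ?_
      rw [hsub i]
      simp [hA, hD]
    have h2 : ∑ i : Fin (n + 1), (-1 : ℂ) ^ ((i : ℕ) + n) * T i * D i =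
        (-1 : ℂ) ^ n * ∑ i : Fin (n + 1), (-1 : ℂ) ^ (i : ℕ) * (T i * D i) := by
      rw [Finset.mul_sum]
      refine Finset.sum_congr rfl fun i _ => ?_
      rw [pow_add]; ring
    have h3 : (-1 : ℂ) ^ n * ∑ i : Fin (n + 1),
        (-1 : ℂ) ^ (i : ℕ) * (T i * D i) = 0 := by rw [← h2, ← h1]
    have hne : ((-1 : ℂ) ^ n) ≠ 0 := by
      simp [pow_ne_zero]
    exact (mul_eq_zero.mp h3).resolve_left hne
  -- divide through by the full product
  set Q : ℂ := ∏ i : Fin (n + 1), T i with hQ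
  have hQne : Q ≠ 0 := Finset.prod_ne_zero_iff.2 fun i _ => hz i
  have hterm : ∀ i : Fin (n + 1),
      (-1 : ℂ) ^ (i : ℕ) *
        ((Matrix.of fun j k : Fin n => f (i.succAbove j) k).det /
          ∏ j : Fin n, ∑ k, f (i.succAbove j) k * z k) =
      (-1 : ℂ) ^ (i : ℕ) * (T i * D i) / Q := by
    intro i
    have hP : Q = T i * ∏ j : Fin n, T (i.succAbove j) :=
      Fin.prod_univ_succAbove T i
    have hPne : (∏ j : Fin n, T (i.succAbove j)) ≠ 0 :=
      Finset.prod_ne_zero_iff.2 fun j _ => hz _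
    have hPne' : (∏ j : Fin n, ∑ k, f (i.succAbove j) k * z k) ≠ 0 := hPne
    have hTi : T i ≠ 0 := hz i
    rw [hP]
    field_simp [hz i, hTi]
    ring
  rw [Finset.sum_congr rfl fun i _ => hterm i, ← Finset.sum_div, key, zero_div]
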